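/- (QDOT sample complexity.) Fix N qubits, a locality parameter k ≤ N, and a global reference string ỹ ∈ S₆^N, where S₆ is the set of the six single-qubit Pauli eigenstates. Let M = (M_x)_{x∈{0,1}^N} be a POVM on (ℂ²)^{⊗N}. Draw N_Mes i.i.d. strings y¹,…,y^{N_Mes} uniformly from S₆^N; given yⁱ, draw the outcome xⁱ ∈ {0,1}^N with probability tr(M_{xⁱ} |yⁱ⟩⟨yⁱ|). For a subset A of the qubits with |A| = k and strings x_A ∈ {0,1}^k, y_A = ỹ|_A, let h = #{i : yⁱ|_A = y_A} and, when h > 0, define M̂^A_{x_A,y_A} = (1/h)·#{i : yⁱ|_A = y_A and xⁱ|_A = x_A}. Then the probability that there exist a subset A of size k and a string x_A ∈ {0,1}^k with |M̂^A_{x_A,ỹ|_A} − M^A_{x_A,ỹ|_A}| ≥ ε is at most 2 · 2^k · C(N,k) · exp(−(1 − e^{−2ε²}) N_Mes / 6^k). In particular, N_Mes ≥ (6^k/(1 − e^{−2ε²}))·[(k+1)·log 2 + log C(N,k) + log(1/δ)] circuits suffice to estimate all such matrix elements to accuracy ε with probability at least 1 − δ. -/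

import Mathlib

set_option maxHeartbeats 1000000


open scoped BigOperators ComplexOrder

/-- The six single-qubit Pauli eigenstates `|0⟩, |1⟩, |±⟩, |±i⟩`. -/
noncomputable def s6 : Fin 6 → Fin 2 → ℂ
  | 0 => ![1, 0]
  | 1 => ![0, 1]
  | 2 => ![1 / (Real.sqrt 2 : ℂ), 1 / (Real.sqrt 2 : ℂ)]
  | 3 => ![1 / (Real.sqrt 2 : ℂ), -(1 / (Real.sqrt 2 : ℂ))]
  | 4 => ![1 / (Real.sqrt 2 : ℂ), Complex.I / (Real.sqrt 2 : ℂ)]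
  | 5 => ![1 / (Real.sqrt 2 : ℂ), -(Complex.I / (Real.sqrt 2 : ℂ))]

/-- Restriction of a string on `N` qubits to a subset `A`. -/
def res {N : ℕ} {γ : Type*} (A : Finset (Fin N)) (x : Fin N → γ) : {j // j ∈ A} → γ :=
  fun j => x j.1

/-- Merge of a bit-string on a subset `A` with a bit-string on its complement. -/
def mer {N : ℕ} (A : Finset (Fin N)) (a : {j // j ∈ A} → Fin 2)
    (b : {j // j ∉ A} → Fin 2) : Fin N → Fin 2 :=
  fun j => if h : j ∈ A then a ⟨j, h⟩ else b ⟨j, h⟩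

/-- The `N`-qubit product state `|y⟩ = |y₁⟩ ⊗ ⋯ ⊗ |y_N⟩` of Pauli eigenstates. -/
noncomputable def qState {N : ℕ} (y : Fin N → Fin 6) : (Fin N → Fin 2) → ℂ :=
  fun x => ∏ j, s6 (y j) (x j)

/-- Born-rule probability `tr(M_x |y⟩⟨y|)` of outcome `x` on input `|y⟩`. -/
noncomputable def born {N : ℕ}
    (M : (Fin N → Fin 2) → Matrix (Fin N → Fin 2) (Fin N → Fin 2) ℂ)
    (y : Fin N → Fin 6) (x : Fin N → Fin 2) : ℝ :=
  (dotProduct (star (qState y)) ((M x).mulVec (qState y))).re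

/-- The reduced POVM effect
`M^A_{x_A} = ∑_{x_Ā} tr_Ā (M_{x_A x_Ā} (1_A ⊗ 1_Ā / 2^(N-k)))` on the qubits of `A`. -/
noncomputable def redEff {N : ℕ}
    (M : (Fin N → Fin 2) → Matrix (Fin N → Fin 2) (Fin N → Fin 2) ℂ)
    (A : Finset (Fin N)) (xA : {j // j ∈ A} → Fin 2) :
    Matrix ({j // j ∈ A} → Fin 2) ({j // j ∈ A} → Fin 2) ℂ :=
  Matrix.of fun a a' =>
    (1 / (2 : ℂ) ^ (N - A.card)) *
      ∑ xb : {j // j ∉ A} → Fin 2, ∑ b : {j // j ∉ A} → Fin 2,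
        M (mer A xA xb) (mer A a b) (mer A a' b)

/-- The product state `|y_A⟩` on the qubits of `A` built from Pauli eigenstates. -/
noncomputable def qStateA {N : ℕ} (A : Finset (Fin N)) (yA : {j // j ∈ A} → Fin 6) :
    ({j // j ∈ A} → Fin 2) → ℂ :=
  fun a => ∏ j, s6 (yA j) (a j)

/-- The reduced matrix element `M^A_{x_A,y_A} = tr(|x_A⟩⟨x_A| M^A(|y_A⟩⟨y_A|))`. -/
noncomputable def redElem {N : ℕ}
    (M : (Fin N → Fin 2) → Matrix (Fin N → Fin 2) (Fin N → Fin 2) ℂ)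
    (A : Finset (Fin N)) (xA : {j // j ∈ A} → Fin 2) (yA : {j // j ∈ A} → Fin 6) : ℝ :=
  (dotProduct (star (qStateA A yA)) ((redEff M A xA).mulVec (qStateA A yA))).re

/-- The QDOT estimator `M̂^A_{x_A,y_A}`: the fraction, among the samples whose input string
restricted to `A` equals `y_A`, of those whose outcome restricted to `A` equals `x_A`. -/
noncomputable def estim {N NMes : ℕ} (A : Finset (Fin N)) (xA : {j // j ∈ A} → Fin 2)
    (yA : {j // j ∈ A} → Fin 6)
    (ω : Fin NMes → (Fin N → Fin 6) × (Fin N → Fin 2)) : ℝ :=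
  ((Finset.univ.filter fun i => res A (ω i).1 = yA ∧ res A (ω i).2 = xA).card : ℝ) /
    ((Finset.univ.filter fun i => res A (ω i).1 = yA).card : ℝ)

/-- Probability weight of a sample sequence: each input string drawn uniformly from `S₆^N`,
each outcome drawn from the Born rule. -/
noncomputable def wgt {N NMes : ℕ}
    (M : (Fin N → Fin 2) → Matrix (Fin N → Fin 2) (Fin N → Fin 2) ℂ)
    (ω : Fin NMes → (Fin N → Fin 6) × (Fin N → Fin 2)) : ℝ :=
  ∏ i, (1 / (6 : ℝ) ^ N) * born M (ω i).1 (ω i).2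

open scoped Classical in
/-- Probability that for some subset `A` of size `k` and some outcome `x_A` the QDOT
estimator deviates from the reduced matrix element by at least `ε`. -/
noncomputable def badProb (N k NMes : ℕ)
    (M : (Fin N → Fin 2) → Matrix (Fin N → Fin 2) (Fin N → Fin 2) ℂ)
    (ytilde : Fin N → Fin 6) (ε : ℝ) : ℝ :=
  ∑ ω ∈ Finset.univ.filter
      (fun ω : Fin NMes → (Fin N → Fin 6) × (Fin N → Fin 2) =>
        ∃ A : Finset (Fin N), A.card = k ∧ ∃ xA : {j // j ∈ A} → Fin 2,
          |estim A xA (res A ytilde) ω - redElem M A xA (res A ytilde)| ≥ ε),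
    wgt M ω

lemma bern_hoeffding (p t : ℝ) (hp0 : 0 ≤ p) (hp1 : p ≤ 1) (ht : 0 ≤ t) :
    1 - p + p * Real.exp t ≤ Real.exp (t * p + t ^ 2 / 8) := by
  set D : ℝ → ℝ := fun x => 1 - p + p * Real.exp x with hDdef
  have hD : ∀ x, 0 < D x := by
    intro x
    have he := Real.exp_pos x
    simp only [hDdef]
    rcases le_total (Real.exp x) 1 with h | h
    · nlinarith [mul_nonneg (sub_nonneg.2 hp1) (sub_nonneg.2 h)]
    · nlinarith [mul_le_mul_of_nonneg_left h hp0]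
  have hDd : ∀ x, HasDerivAt D (p * Real.exp x) x := by
    intro x
    exact (((Real.hasDerivAt_exp x).const_mul p).const_add (1 - p))
  set φ : ℝ → ℝ := fun x => p + x / 4 - p * Real.exp x / D x with hφdef
  have hφd : ∀ x, HasDerivAt φ
      (1 / 4 - (p * Real.exp x * D x - p * Real.exp x * (p * Real.exp x)) / (D x) ^ 2) x := by
    intro x
    have h1 : HasDerivAt (fun x : ℝ => p * Real.exp x / D x)
        ((p * Real.exp x * D x - p * Real.exp x * (p * Real.exp x)) / (D x) ^ 2) x :=
      ((Real.hasDerivAt_exp x).const_mul p).div (hDd x) (hD x).ne'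
    have h2 : HasDerivAt (fun x : ℝ => p + x / 4) (1 / 4) x := by
      simpa using ((hasDerivAt_id x).div_const 4).const_add p
    exact h2.sub h1
  have hφmono : Monotone φ := by
    apply monotone_of_deriv_nonneg
    · intro x; exact (hφd x).differentiableAt
    · intro x
      rw [(hφd x).deriv]
      have hd := hD x
      rw [sub_nonneg, div_le_iff₀ (by positivity)]
      nlinarith [sq_nonneg (D x / 2 - p * Real.exp x)]
  have hφ0 : φ 0 = 0 := by simp [hφdef, hDdef]
  have hφnn : ∀ x, 0 ≤ x → 0 ≤ φ x := by
    intro x hx; rw [← hφ0]; exact hφmono hx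
  set f : ℝ → ℝ := fun x => x * p + x ^ 2 / 8 - Real.log (D x) with hfdef
  have hfd : ∀ x, HasDerivAt f (φ x) x := by
    intro x
    have h1 : HasDerivAt (fun x : ℝ => x * p) p x := by
      simpa using (hasDerivAt_id x).mul_const p
    have h2 : HasDerivAt (fun x : ℝ => x ^ 2 / 8) (x / 4) x := by
      have := (hasDerivAt_pow 2 x).div_const 8
      simpa using this.congr_deriv (by ring)
    have h3 : HasDerivAt (fun x => Real.log (D x)) (p * Real.exp x / D x) x :=
      (hDd x).log (hD x).ne'
    exact (h1.add h2).sub h3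
  have hfmono : MonotoneOn f (Set.Ici 0) := by
    apply monotoneOn_of_deriv_nonneg (convex_Ici 0)
    · exact (Differentiable.continuous fun x => (hfd x).differentiableAt).continuousOn
    · intro x _; exact (hfd x).differentiableAt.differentiableWithinAt
    · intro x hx; rw [(hfd x).deriv]
      exact hφnn x (le_of_lt (by simpa using hx))
  have hf0 : f 0 = 0 := by simp [hfdef, hDdef]
  have hft : 0 ≤ f t := by rw [← hf0]; exact hfmono (by simp) (by simpa using ht) ht
  have hlog : Real.log (D t) ≤ t * p + t ^ 2 / 8 := by
    simp only [hfdef] at hft; linarith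
  calc D t = Real.exp (Real.log (D t)) := (Real.exp_log (hD t)).symm
    _ ≤ _ := Real.exp_le_exp.mpr hlog

lemma side_bound (p ε : ℝ) (hp0 : 0 ≤ p) (hp1 : p ≤ 1) (hε : 0 < ε) :
    p * Real.exp (4 * ε * (1 - p - ε)) + (1 - p) * Real.exp (-(4 * ε) * (p + ε)) ≤
      Real.exp (-2 * ε ^ 2) := by
  have h := bern_hoeffding p (4 * ε) hp0 hp1 (by positivity)
  have e1 : Real.exp (4 * ε * (1 - p - ε)) =
      Real.exp (4 * ε) * Real.exp (-(4 * ε) * (p + ε)) := by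
    rw [← Real.exp_add]; ring_nf
  have e2 : Real.exp (4 * ε * p + (4 * ε) ^ 2 / 8) * Real.exp (-(4 * ε) * (p + ε)) =
      Real.exp (-2 * ε ^ 2) := by
    rw [← Real.exp_add]; congr 1; ring
  calc p * Real.exp (4 * ε * (1 - p - ε)) + (1 - p) * Real.exp (-(4 * ε) * (p + ε))
      = (1 - p + p * Real.exp (4 * ε)) * Real.exp (-(4 * ε) * (p + ε)) := by
        rw [e1]; ring
    _ ≤ Real.exp (4 * ε * p + (4 * ε) ^ 2 / 8) * Real.exp (-(4 * ε) * (p + ε)) := by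
        apply mul_le_mul_of_nonneg_right _ (Real.exp_pos _).le
        simpa using h
    _ = Real.exp (-2 * ε ^ 2) := e2

/-- union bound, finitary -/
lemma union_bound {α ι : Type*} [Fintype α] (f : α → ℝ) (hf : ∀ a, 0 ≤ f a)
    (s : Finset ι) (P : ι → α → Prop) [∀ i, DecidablePred (P i)]
    [DecidablePred fun a => ∃ i ∈ s, P i a] :
    ∑ a ∈ Finset.univ.filter (fun a => ∃ i ∈ s, P i a), f a ≤
      ∑ i ∈ s, ∑ a ∈ Finset.univ.filter (P i), f a := by
  rw [Finset.sum_filter]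
  have swap : ∑ i ∈ s, ∑ a ∈ Finset.univ.filter (P i), f a
      = ∑ a : α, ∑ i ∈ s, if P i a then f a else 0 := by
    rw [Finset.sum_comm]
    exact Finset.sum_congr rfl fun a _ => by rw [Finset.sum_filter]
  rw [swap]
  apply Finset.sum_le_sum
  intro a _
  by_cases h : ∃ i ∈ s, P i a
  · rw [if_pos h]
    obtain ⟨i0, hi0, hP⟩ := h
    calc f a = (if P i0 a then f a else 0) := by rw [if_pos hP]
      _ ≤ _ := Finset.single_le_sum (f := fun i => if P i a then f a else 0)
          (fun i _ => by split_ifs; exacts [hf a, le_rfl]) hi0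
  · rw [if_neg h]
    exact Finset.sum_nonneg fun i _ => by split_ifs; exacts [hf a, le_rfl]

lemma union_bound' {α ι : Type*} [Fintype α] [DecidableEq α] (f : α → ℝ) (hf : ∀ a, 0 ≤ f a)
    (s : Finset ι) (B : Finset α) (Bi : ι → Finset α)
    (hcov : ∀ a ∈ B, ∃ i ∈ s, a ∈ Bi i) :
    ∑ a ∈ B, f a ≤ ∑ i ∈ s, ∑ a ∈ Bi i, f a := by
  calc ∑ a ∈ B, f a
      ≤ ∑ a ∈ B, ∑ i ∈ s, (if a ∈ Bi i then f a else 0) := by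
        apply Finset.sum_le_sum
        intro a ha
        obtain ⟨i0, hi0, hmem⟩ := hcov a ha
        calc f a = (if a ∈ Bi i0 then f a else 0) := by rw [if_pos hmem]
          _ ≤ _ := Finset.single_le_sum
              (f := fun i => if a ∈ Bi i then f a else 0)
              (fun i _ => by by_cases h : a ∈ Bi i <;> simp [h, hf a]) hi0
    _ ≤ ∑ a : α, ∑ i ∈ s, (if a ∈ Bi i then f a else 0) :=
        Finset.sum_le_sum_of_subset_of_nonneg (Finset.subset_univ B)
          (fun a _ _ => Finset.sum_nonneg fun i _ => by split_ifs; exacts [hf a, le_rfl])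
    _ = ∑ i ∈ s, ∑ a ∈ Bi i, f a := by
        rw [Finset.sum_comm]
        refine Finset.sum_congr rfl fun i _ => ?_
        rw [← Finset.sum_filter, Finset.filter_mem_eq_inter, Finset.univ_inter]

lemma sum_filter_or_le {α : Type*} [Fintype α] (f : α → ℝ) (hf : ∀ a, 0 ≤ f a)
    (P Q : α → Prop) [DecidablePred P] [DecidablePred Q] [DecidableEq α] :
    ∑ a ∈ Finset.univ.filter (fun a => P a ∨ Q a), f a ≤
      ∑ a ∈ Finset.univ.filter P, f a + ∑ a ∈ Finset.univ.filter Q, f a := by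
  rw [Finset.filter_or]
  have := Finset.sum_union_inter (s₁ := Finset.univ.filter P) (s₂ := Finset.univ.filter Q) (f := f)
  have h2 : 0 ≤ ∑ a ∈ Finset.univ.filter P ∩ Finset.univ.filter Q, f a :=
    Finset.sum_nonneg fun a _ => hf a
  linarith

lemma sum_filter_le_filter {α : Type*} [Fintype α] (f : α → ℝ) (hf : ∀ a, 0 ≤ f a)
    (P Q : α → Prop) [DecidablePred P] [DecidablePred Q] (h : ∀ a, P a → Q a) :
    ∑ a ∈ Finset.univ.filter P, f a ≤ ∑ a ∈ Finset.univ.filter Q, f a :=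
  Finset.sum_le_sum_of_subset_of_nonneg
    (Finset.monotone_filter_right _ (fun a _ => h a)) (fun a _ _ => hf a)

/-- sum over all functions of a product of per-coordinate values -/
lemma sum_pi_prod {ι κ : Type*} [DecidableEq ι] [Fintype ι] [Fintype κ] {R : Type*}
    [CommSemiring R] (g : ι → κ → R) :
    ∑ z : ι → κ, ∏ j, g j (z j) = ∏ j, ∑ b, g j b := by
  rw [← Finset.sum_prod_piFinset Finset.univ g, Fintype.piFinset_univ]

lemma sum_pi_prod_const {n : ℕ} {κ : Type*} [Fintype κ] {R : Type*} [CommSemiring R]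
    (g : κ → R) : ∑ z : Fin n → κ, ∏ j, g (z j) = (∑ b, g b) ^ n := by
  rw [sum_pi_prod (fun _ => g)]
  simp

lemma chernoff_core {σ : Type*} [Fintype σ] (n : ℕ) (w : σ → ℝ) (hw : ∀ s, 0 ≤ w s)
    (T1 T2 : σ → Prop) [DecidablePred T1] [DecidablePred T2]
    (hdisj : ∀ s, ¬(T1 s ∧ T2 s)) (c1 c2 : ℝ) :
    ∑ ω ∈ Finset.univ.filter (fun ω : Fin n → σ =>
        0 ≤ c1 * ((Finset.univ.filter fun i => T1 (ω i)).card : ℝ)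
          + c2 * ((Finset.univ.filter fun i => T2 (ω i)).card : ℝ)),
      ∏ i, w (ω i) ≤
    ((∑ s ∈ Finset.univ.filter (fun s => ¬T1 s ∧ ¬T2 s), w s)
      + (∑ s ∈ Finset.univ.filter T1, w s) * Real.exp c1
      + (∑ s ∈ Finset.univ.filter T2, w s) * Real.exp c2) ^ n := by
  set e : σ → ℝ := fun s => if T1 s then c1 else if T2 s then c2 else 0 with he
  have hsum_e : ∀ ω : Fin n → σ, ∑ i, e (ω i) =
      c1 * ((Finset.univ.filter fun i => T1 (ω i)).card : ℝ)
        + c2 * ((Finset.univ.filter fun i => T2 (ω i)).card : ℝ) := by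
    intro ω
    have point : ∀ i, e (ω i) =
        (if T1 (ω i) then c1 else 0) + (if T2 (ω i) then c2 else 0) := by
      intro i
      by_cases h1 : T1 (ω i) <;> by_cases h2 : T2 (ω i) <;>
        simp [he, h1, h2] <;> exact absurd ⟨h1, h2⟩ (hdisj (ω i))
    rw [Finset.sum_congr rfl fun i _ => point i, Finset.sum_add_distrib]
    congr 1
    · rw [← Finset.sum_filter, Finset.sum_const, nsmul_eq_mul, mul_comm]
    · rw [← Finset.sum_filter, Finset.sum_const, nsmul_eq_mul, mul_comm]
  calc ∑ ω ∈ Finset.univ.filter (fun ω : Fin n → σ =>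
        0 ≤ c1 * ((Finset.univ.filter fun i => T1 (ω i)).card : ℝ)
          + c2 * ((Finset.univ.filter fun i => T2 (ω i)).card : ℝ)), ∏ i, w (ω i)
      ≤ ∑ ω ∈ Finset.univ.filter (fun ω : Fin n → σ =>
        0 ≤ c1 * ((Finset.univ.filter fun i => T1 (ω i)).card : ℝ)
          + c2 * ((Finset.univ.filter fun i => T2 (ω i)).card : ℝ)),
          ∏ i, (w (ω i) * Real.exp (e (ω i))) := by
        apply Finset.sum_le_sum
        intro ω hω
        rw [Finset.mem_filter] at hω
        rw [Finset.prod_mul_distrib, ← Real.exp_sum, hsum_e ω]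
        exact le_mul_of_one_le_right (Finset.prod_nonneg fun i _ => hw _)
          (Real.one_le_exp hω.2)
    _ ≤ ∑ ω : Fin n → σ, ∏ i, (w (ω i) * Real.exp (e (ω i))) :=
        Finset.sum_le_sum_of_subset_of_nonneg (Finset.filter_subset _ _)
          (fun ω _ _ => Finset.prod_nonneg fun i _ => mul_nonneg (hw _) (Real.exp_pos _).le)
    _ = (∑ s, w s * Real.exp (e s)) ^ n := by
        exact sum_pi_prod_const (fun s => w s * Real.exp (e s))
    _ = _ := by
        congr 1
        rw [← Finset.sum_filter_add_sum_filter_not Finset.univ T1 (fun s => w s * Real.exp (e s)),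
          ← Finset.sum_filter_add_sum_filter_not (Finset.univ.filter fun s => ¬T1 s) T2
            (fun s => w s * Real.exp (e s))]
        have h1 : ∑ s ∈ Finset.univ.filter T1, w s * Real.exp (e s)
            = (∑ s ∈ Finset.univ.filter T1, w s) * Real.exp c1 := by
          rw [Finset.sum_mul]
          exact Finset.sum_congr rfl fun s hs => by
            rw [Finset.mem_filter] at hs; simp [he, hs.2]
        have h2 : ∑ s ∈ ((Finset.univ.filter fun s => ¬T1 s).filter T2),
              w s * Real.exp (e s)
            = (∑ s ∈ Finset.univ.filter T2, w s) * Real.exp c2 := by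
          rw [Finset.filter_filter, Finset.sum_mul]
          have hset : (Finset.univ.filter fun s => ¬T1 s ∧ T2 s)
              = Finset.univ.filter T2 := by
            apply Finset.filter_congr
            intro s _
            constructor
            · exact fun h => h.2
            · exact fun h => ⟨fun h1 => hdisj s ⟨h1, h⟩, h⟩
          rw [hset]
          exact Finset.sum_congr rfl fun s hs => by
            rw [Finset.mem_filter] at hs
            have : ¬T1 s := fun h1 => hdisj s ⟨h1, hs.2⟩
            simp [he, this, hs.2]
        have h3 : ∑ s ∈ ((Finset.univ.filter fun s => ¬T1 s).filter fun s => ¬T2 s),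
              w s * Real.exp (e s)
            = ∑ s ∈ Finset.univ.filter (fun s => ¬T1 s ∧ ¬T2 s), w s := by
          rw [Finset.filter_filter]
          exact Finset.sum_congr rfl fun s hs => by
            rw [Finset.mem_filter] at hs
            simp [he, hs.2.1, hs.2.2]
        rw [h1, h2, h3]
        ring

lemma sqrt2_ne : ((Real.sqrt 2 : ℝ) : ℂ) ≠ 0 := by
  simp only [ne_eq, Complex.ofReal_eq_zero]
  positivity

lemma sqrt2_sq : ((Real.sqrt 2 : ℝ) : ℂ) * ((Real.sqrt 2 : ℝ) : ℂ) = 2 := by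
  rw [← Complex.ofReal_mul, Real.mul_self_sqrt (by norm_num)]
  norm_num

lemma sqrt2_pow : ((Real.sqrt 2 : ℝ) : ℂ) ^ 2 = 2 := by rw [sq]; exact sqrt2_sq

lemma s6_norm (s : Fin 6) : ∑ b : Fin 2, (starRingEnd ℂ) (s6 s b) * s6 s b = 1 := by
  have hne := sqrt2_ne
  have h2' := sqrt2_pow
  fin_cases s <;>
    (try simp [s6, Fin.sum_univ_two, map_div₀, Complex.conj_ofReal, Complex.conj_I]) <;>
    (try field_simp) <;> (try ring_nf) <;>
    (try simp [Complex.I_sq]) <;> (try ring_nf) <;>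
    first
      | rfl
      | linear_combination -h2'
      | linear_combination h2'
      | linear_combination (2:ℂ) * h2'
      | linear_combination (-2:ℂ) * h2'

lemma s6_ortho (b b' : Fin 2) :
    ∑ s : Fin 6, (starRingEnd ℂ) (s6 s b) * s6 s b' = if b = b' then 3 else 0 := by
  have hne := sqrt2_ne
  have h2' := sqrt2_pow
  fin_cases b <;> fin_cases b' <;>
    (try simp [s6, Fin.sum_univ_six, map_div₀, Complex.conj_ofReal, Complex.conj_I]) <;>
    (try field_simp) <;> (try ring_nf) <;>
    (try simp [Complex.I_sq]) <;> (try ring_nf) <;>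
    first
      | rfl
      | linear_combination -h2'
      | linear_combination h2'
      | linear_combination (2:ℂ) * h2'
      | linear_combination (-2:ℂ) * h2'


-- === auxiliary ===

def merG {N : ℕ} {γ : Type*} (A : Finset (Fin N)) (a : {j // j ∈ A} → γ)
    (b : {j // j ∉ A} → γ) : Fin N → γ :=
  fun j => if h : j ∈ A then a ⟨j, h⟩ else b ⟨j, h⟩

lemma mer_eq_merG {N : ℕ} (A : Finset (Fin N)) (a : {j // j ∈ A} → Fin 2)
    (b : {j // j ∉ A} → Fin 2) : mer A a b = merG A a b := rfl

lemma res_merG {N : ℕ} {γ : Type*} (A : Finset (Fin N)) (a : {j // j ∈ A} → γ)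
    (b : {j // j ∉ A} → γ) : res A (merG A a b) = a := by
  funext j
  simp [res, merG, j.2]

lemma resC_merG {N : ℕ} {γ : Type*} (A : Finset (Fin N)) (a : {j // j ∈ A} → γ)
    (b : {j // j ∉ A} → γ) : (fun j : {j // j ∉ A} => merG A a b j.1) = b := by
  funext j
  simp [merG, j.2]

lemma merG_res {N : ℕ} {γ : Type*} (A : Finset (Fin N)) (y : Fin N → γ) :
    merG A (res A y) (fun j => y j.1) = y := by
  funext j
  by_cases h : j ∈ A <;> simp [merG, res, h]

def splitE {N : ℕ} (γ : Type*) (A : Finset (Fin N)) :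
    (({j // j ∈ A} → γ) × ({j // j ∉ A} → γ)) ≃ (Fin N → γ) where
  toFun p := merG A p.1 p.2
  invFun y := (res A y, fun j => y j.1)
  left_inv p := by
    ext1
    · exact res_merG A p.1 p.2
    · exact resC_merG A p.1 p.2
  right_inv y := merG_res A y

lemma sum_mer {N : ℕ} {γ : Type*} [Fintype γ] {M : Type*} [AddCommMonoid M]
    (A : Finset (Fin N)) (f : (Fin N → γ) → M) :
    ∑ y : Fin N → γ, f y = ∑ a : {j // j ∈ A} → γ, ∑ b : {j // j ∉ A} → γ, f (merG A a b) := by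
  rw [← Equiv.sum_comp (splitE γ A) f, Fintype.sum_prod_type]
  rfl

lemma sum_res_eq {N : ℕ} {γ : Type*} [Fintype γ] [DecidableEq γ] {M : Type*} [AddCommMonoid M]
    (A : Finset (Fin N)) (yA : {j // j ∈ A} → γ) (f : (Fin N → γ) → M) :
    ∑ y ∈ Finset.univ.filter (fun y => res A y = yA), f y
      = ∑ b : {j // j ∉ A} → γ, f (merG A yA b) := by
  rw [Finset.sum_filter, sum_mer A (fun y => if res A y = yA then f y else 0)]
  simp_rw [res_merG]
  rw [Finset.sum_comm]
  simp

lemma prod_split {N : ℕ} {M : Type*} [CommMonoid M] (A : Finset (Fin N)) (f : Fin N → M) :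
    ∏ j, f j = (∏ j : {j // j ∈ A}, f j.1) * ∏ j : {j // j ∉ A}, f j.1 := by
  rw [← Finset.prod_mul_prod_compl A f]
  congr 1
  · exact Finset.prod_subtype A (fun x => Iff.rfl) f
  · exact Finset.prod_subtype Aᶜ (fun x => Finset.mem_compl) f

noncomputable def qStateB {N : ℕ} (A : Finset (Fin N)) (yB : {j // j ∉ A} → Fin 6)
    (b : {j // j ∉ A} → Fin 2) : ℂ :=
  ∏ j, s6 (yB j) (b j)

lemma qState_merG {N : ℕ} (A : Finset (Fin N)) (yA : {j // j ∈ A} → Fin 6)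
    (yB : {j // j ∉ A} → Fin 6) (a : {j // j ∈ A} → Fin 2) (b : {j // j ∉ A} → Fin 2) :
    qState (merG A yA yB) (merG A a b) = qStateA A yA a * qStateB A yB b := by
  rw [qState, prod_split A, qStateA, qStateB]
  congr 1
  · exact Finset.prod_congr rfl fun j _ => by simp [merG, j.2]
  · exact Finset.prod_congr rfl fun j _ => by simp [merG, j.2]

lemma qStateB_ortho {N : ℕ} (A : Finset (Fin N)) (b b' : {j // j ∉ A} → Fin 2) :
    ∑ yB : {j // j ∉ A} → Fin 6, (starRingEnd ℂ) (qStateB A yB b) * qStateB A yB b'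
      = if b = b' then (3 : ℂ) ^ (Fintype.card {j // j ∉ A}) else 0 := by
  unfold qStateB
  simp_rw [map_prod, ← Finset.prod_mul_distrib]
  rw [sum_pi_prod (fun j s => (starRingEnd ℂ) (s6 s (b j)) * s6 s (b' j))]
  by_cases h : b = b'
  · subst h
    simp only [if_pos rfl]
    rw [Finset.prod_congr rfl fun j _ => s6_ortho (b j) (b j)]
    simp [Finset.prod_const]
  · rw [if_neg h]
    obtain ⟨j, hj⟩ := Function.ne_iff.mp h
    exact Finset.prod_eq_zero (Finset.mem_univ j)
      (by rw [s6_ortho, if_neg hj])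


-- === born lemmas ===

lemma dot_expand {n : Type*} [Fintype n] (v : n → ℂ) (Mx : Matrix n n ℂ) :
    dotProduct (star v) (Mx.mulVec v)
      = ∑ z, ∑ z', (starRingEnd ℂ) (v z) * Mx z z' * v z' := by
  simp only [dotProduct, Matrix.mulVec, Pi.star_apply, Complex.star_def, Finset.mul_sum]
  exact Finset.sum_congr rfl fun z _ => Finset.sum_congr rfl fun z' _ => by ring

lemma dot_sum {n : Type*} [Fintype n] {ι : Type*} (s : Finset ι) (v : n → ℂ)
    (f : ι → Matrix n n ℂ) :
    ∑ i ∈ s, dotProduct (star v) ((f i).mulVec v)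
      = dotProduct (star v) ((∑ i ∈ s, f i).mulVec v) := by
  simp only [dot_expand, Matrix.sum_apply, Finset.mul_sum, Finset.sum_mul]
  rw [Finset.sum_comm]
  refine Finset.sum_congr rfl fun z _ => ?_
  rw [Finset.sum_comm]

lemma born_nonneg {N : ℕ} {M : (Fin N → Fin 2) → Matrix (Fin N → Fin 2) (Fin N → Fin 2) ℂ}
    (hpsd : ∀ x, (M x).PosSemidef) (y : Fin N → Fin 6) (x : Fin N → Fin 2) :
    0 ≤ born M y x := by
  have h := (hpsd x).dotProduct_mulVec_nonneg (qState y)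
  exact (Complex.le_def.mp h).1

lemma qState_norm {N : ℕ} (y : Fin N → Fin 6) :
    dotProduct (star (qState y)) (qState y) = 1 := by
  simp only [dotProduct, Pi.star_apply, Complex.star_def, qState, map_prod,
    ← Finset.prod_mul_distrib]
  rw [sum_pi_prod (fun j b => (starRingEnd ℂ) (s6 (y j) b) * s6 (y j) b)]
  rw [Finset.prod_congr rfl fun j _ => s6_norm (y j)]
  simp

lemma born_total {N : ℕ} {M : (Fin N → Fin 2) → Matrix (Fin N → Fin 2) (Fin N → Fin 2) ℂ}
    (hsum : ∑ x, M x = 1) (y : Fin N → Fin 6) : ∑ x, born M y x = 1 := by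
  unfold born
  rw [← Complex.re_sum, dot_sum, hsum, Matrix.one_mulVec, qState_norm]
  simp

open Classical in
lemma born_double_sum {N : ℕ}
    (M : (Fin N → Fin 2) → Matrix (Fin N → Fin 2) (Fin N → Fin 2) ℂ)
    (A : Finset (Fin N)) (xA : {j // j ∈ A} → Fin 2) (yA : {j // j ∈ A} → Fin 6) :
    ∑ y ∈ Finset.univ.filter (fun y => res A y = yA),
      ∑ x ∈ Finset.univ.filter (fun x => res A x = xA), born M y x
    = (6 : ℝ) ^ (N - A.card) * redElem M A xA yA := by
  classical
  set m := N - A.card with hmdef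
  have hm : Fintype.card {j // j ∉ A} = m := by
    simp [Fintype.card_subtype_compl, hmdef]
  set u := qStateA A yA with hu
  set K : Matrix (Fin N → Fin 2) (Fin N → Fin 2) ℂ :=
    ∑ xB : {j // j ∉ A} → Fin 2, M (merG A xA xB) with hK
  have hx : ∀ y : Fin N → Fin 6,
      (∑ x ∈ Finset.univ.filter (fun x => res A x = xA),
        dotProduct (star (qState y)) ((M x).mulVec (qState y)))
      = dotProduct (star (qState y)) (K.mulVec (qState y)) := by
    intro y
    rw [sum_res_eq A xA
      (fun x => dotProduct (star (qState y)) ((M x).mulVec (qState y)))]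
    rw [dot_sum Finset.univ (qState y) (fun xB => M (merG A xA xB))]
  have main : (∑ yB : {j // j ∉ A} → Fin 6,
      dotProduct (star (qState (merG A yA yB))) (K.mulVec (qState (merG A yA yB))))
      = (6 : ℂ) ^ m * dotProduct (star u) ((redEff M A xA).mulVec u) := by
    have step1 : ∀ yB : {j // j ∉ A} → Fin 6,
        dotProduct (star (qState (merG A yA yB))) (K.mulVec (qState (merG A yA yB)))
        = ∑ a : {j // j ∈ A} → Fin 2, ∑ b : {j // j ∉ A} → Fin 2,
            ∑ a' : {j // j ∈ A} → Fin 2, ∑ b' : {j // j ∉ A} → Fin 2,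
            ((starRingEnd ℂ) (u a) * (starRingEnd ℂ) (qStateB A yB b)) *
              K (merG A a b) (merG A a' b') * (u a' * qStateB A yB b') := by
      intro yB
      rw [dot_expand]
      rw [sum_mer A (fun z => ∑ z', (starRingEnd ℂ) (qState (merG A yA yB) z) *
            K z z' * qState (merG A yA yB) z')]
      refine Finset.sum_congr rfl fun a _ => Finset.sum_congr rfl fun b _ => ?_
      rw [sum_mer A (fun z' => (starRingEnd ℂ) (qState (merG A yA yB) (merG A a b)) *
            K (merG A a b) z' * qState (merG A yA yB) z')]
      simp only [qState_merG, map_mul]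
      rfl
    rw [Finset.sum_congr rfl fun yB _ => step1 yB]
    rw [Finset.sum_comm]
    rw [Finset.sum_congr rfl fun a _ => Finset.sum_comm]
    rw [Finset.sum_congr rfl fun a _ => Finset.sum_congr rfl fun b _ => Finset.sum_comm]
    rw [Finset.sum_congr rfl fun a _ => Finset.sum_congr rfl fun b _ =>
      Finset.sum_congr rfl fun a' _ => Finset.sum_comm]
    have step3 : ∀ (a : {j // j ∈ A} → Fin 2) (b : {j // j ∉ A} → Fin 2)
        (a' : {j // j ∈ A} → Fin 2) (b' : {j // j ∉ A} → Fin 2),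
        (∑ yB : {j // j ∉ A} → Fin 6,
          ((starRingEnd ℂ) (u a) * (starRingEnd ℂ) (qStateB A yB b)) *
            K (merG A a b) (merG A a' b') * (u a' * qStateB A yB b'))
        = ((starRingEnd ℂ) (u a) * K (merG A a b) (merG A a' b') * u a') *
            (if b = b' then (3 : ℂ) ^ m else 0) := by
      intro a b a' b'
      rw [show ∀ X : ℂ, ((starRingEnd ℂ) (u a) * K (merG A a b) (merG A a' b') * u a') * X
        = ((starRingEnd ℂ) (u a) * K (merG A a b) (merG A a' b') * u a') * X from fun _ => rfl]
      rw [← hm, ← qStateB_ortho A b b', Finset.mul_sum]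
      exact Finset.sum_congr rfl fun yB _ => by ring
    rw [Finset.sum_congr rfl fun a _ => Finset.sum_congr rfl fun b _ =>
      Finset.sum_congr rfl fun a' _ => Finset.sum_congr rfl fun b' _ => step3 a b a' b']
    simp only [mul_ite, mul_zero, Finset.sum_ite_eq, Finset.mem_univ, if_true]
    rw [Finset.sum_congr rfl fun a _ => Finset.sum_comm]
    have step6 : ∀ (a a' : {j // j ∈ A} → Fin 2),
        (∑ b : {j // j ∉ A} → Fin 2, K (merG A a b) (merG A a' b))
        = (2 : ℂ) ^ m * redEff M A xA a a' := by
      intro a a'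
      have h2 : ((2 : ℂ) ^ m)⁻¹ * ((2:ℂ)^m) = 1 := by
        field_simp
      have hre : redEff M A xA a a' = (1 / (2:ℂ)^m) *
          ∑ xb : {j // j ∉ A} → Fin 2, ∑ b : {j // j ∉ A} → Fin 2,
            M (mer A xA xb) (mer A a b) (mer A a' b) := rfl
      rw [hre]
      simp only [mer_eq_merG]
      rw [Finset.sum_congr rfl fun b (_ : b ∈ Finset.univ) =>
        (Matrix.sum_apply (merG A a b) (merG A a' b) Finset.univ
          (fun xB => M (merG A xA xB)) : K (merG A a b) (merG A a' b) = _)]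
      rw [Finset.sum_comm]
      rw [one_div, ← mul_assoc, mul_comm ((2:ℂ)^m) _, h2, one_mul]
    rw [dot_expand u (redEff M A xA)]
    rw [Finset.mul_sum]
    refine Finset.sum_congr rfl fun a _ => ?_
    rw [Finset.mul_sum]
    refine Finset.sum_congr rfl fun a' _ => ?_
    have : (∑ b : {j // j ∉ A} → Fin 2,
        (starRingEnd ℂ) (u a) * K (merG A a b) (merG A a' b) * u a' * (3:ℂ)^m)
        = ((starRingEnd ℂ) (u a) * u a' * (3:ℂ)^m) *
            ∑ b : {j // j ∉ A} → Fin 2, K (merG A a b) (merG A a' b) := by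
      rw [Finset.mul_sum]
      exact Finset.sum_congr rfl fun b _ => by ring
    rw [this, step6]
    ring_nf
    rw [show (6:ℂ) = 2 * 3 by norm_num, mul_pow]
    ring
  -- assemble
  have hre : ∀ y, (∑ x ∈ Finset.univ.filter (fun x => res A x = xA), born M y x)
      = (dotProduct (star (qState y)) (K.mulVec (qState y))).re := by
    intro y
    unfold born
    rw [← Complex.re_sum, hx y]
  rw [Finset.sum_congr rfl fun y _ => hre y]
  rw [sum_res_eq A yA (fun y => (dotProduct (star (qState y)) (K.mulVec (qState y))).re)]
  rw [← Complex.re_sum, main]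
  rw [show ((6:ℂ)^m) = ((((6:ℝ)^m : ℝ)) : ℂ) by push_cast; ring]
  rw [Complex.re_ofReal_mul]
  rfl


lemma sum_prod_filter_fst {α β : Type*} [Fintype α] [Fintype β] {M : Type*} [AddCommMonoid M]
    (P : α → Prop) [DecidablePred P] (f : α × β → M) :
    ∑ s ∈ Finset.univ.filter (fun s : α × β => P s.1), f s
      = ∑ a ∈ Finset.univ.filter P, ∑ b, f (a, b) := by
  simp only [Finset.sum_filter]
  rw [Fintype.sum_prod_type]
  refine Finset.sum_congr rfl fun a _ => ?_
  by_cases h : P a <;> simp [h]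

lemma sum_prod_filter_both {α β : Type*} [Fintype α] [Fintype β] {M : Type*} [AddCommMonoid M]
    (P : α → Prop) (Q : β → Prop) [DecidablePred P] [DecidablePred Q] (f : α × β → M) :
    ∑ s ∈ Finset.univ.filter (fun s : α × β => P s.1 ∧ Q s.2), f s
      = ∑ a ∈ Finset.univ.filter P, ∑ b ∈ Finset.univ.filter Q, f (a, b) := by
  simp only [Finset.sum_filter]
  rw [Fintype.sum_prod_type]
  refine Finset.sum_congr rfl fun a _ => ?_
  by_cases h : P a <;> simp [h]

lemma pair_bound {N k NMes : ℕ} (hk : k ≤ N)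
    (M : (Fin N → Fin 2) → Matrix (Fin N → Fin 2) (Fin N → Fin 2) ℂ)
    (hpsd : ∀ x, (M x).PosSemidef) (hsum : ∑ x, M x = 1)
    (A : Finset (Fin N)) (hA : A.card = k) (xA : {j // j ∈ A} → Fin 2)
    (yA : {j // j ∈ A} → Fin 6) (ε : ℝ) (hε : 0 < ε) :
    ∑ ω ∈ Finset.univ.filter
        (fun ω : Fin NMes → (Fin N → Fin 6) × (Fin N → Fin 2) =>
          |estim A xA yA ω - redElem M A xA yA| ≥ ε),
      wgt M ω ≤ 2 * Real.exp (-(1 - Real.exp (-2 * ε ^ 2)) * NMes / 6 ^ k) := by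
  set p := redElem M A xA yA with hp
  set q : ℝ := 1 / 6 ^ k with hq
  set w : (Fin N → Fin 6) × (Fin N → Fin 2) → ℝ :=
    fun s => (1 / (6 : ℝ) ^ N) * born M s.1 s.2 with hwdef
  have hw : ∀ s, 0 ≤ w s := fun s => mul_nonneg (by positivity) (born_nonneg hpsd s.1 s.2)
  have hwgt : ∀ ω : Fin NMes → (Fin N → Fin 6) × (Fin N → Fin 2),
      wgt M ω = ∏ i, w (ω i) := fun ω => rfl
  have hq0 : (0:ℝ) < q := by rw [hq]; positivity
  have h6k : (0:ℝ) < 6 ^ k := by positivity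
  -- fiber sums
  have hcard6 : Fintype.card ({j // j ∉ A} → Fin 6) = 6 ^ (N - k) := by
    rw [Fintype.card_fun, Fintype.card_subtype_compl]
    simp [hA]
  have hcardy : ((Finset.univ.filter
      (fun y : Fin N → Fin 6 => res A y = yA)).card : ℝ) = 6 ^ (N - k) := by
    have h1 := sum_res_eq A yA (fun _ => (1 : ℝ))
    simp only [Finset.sum_const, nsmul_eq_mul, mul_one, Finset.card_univ] at h1
    rw [h1, hcard6]
    push_cast
    ring
  have h6split : (6:ℝ) ^ N = 6 ^ (N - k) * 6 ^ k := by
    rw [← pow_add, Nat.sub_add_cancel hk]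
  have hWq : ∑ s ∈ Finset.univ.filter
      (fun s : (Fin N → Fin 6) × (Fin N → Fin 2) => res A s.1 = yA), w s = q := by
    rw [sum_prod_filter_fst (fun y => res A y = yA) w]
    have hrow : ∀ a : Fin N → Fin 6, ∑ b : Fin N → Fin 2, w (a, b) = 1 / 6 ^ N := by
      intro a
      simp only [hwdef]
      rw [← Finset.mul_sum, born_total hsum, mul_one]
    rw [Finset.sum_congr rfl fun a _ => hrow a, Finset.sum_const, nsmul_eq_mul, hcardy,
      hq, h6split]
    field_simp
  have hWqp : ∑ s ∈ Finset.univ.filter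
      (fun s : (Fin N → Fin 6) × (Fin N → Fin 2) =>
        res A s.1 = yA ∧ res A s.2 = xA), w s = q * p := by
    rw [sum_prod_filter_both (fun y => res A y = yA) (fun x => res A x = xA) w]
    simp only [hwdef]
    simp_rw [← Finset.mul_sum]
    rw [born_double_sum M A xA yA, hA, ← hp, hq, h6split]
    field_simp
  have hW2 : ∑ s ∈ Finset.univ.filter
      (fun s : (Fin N → Fin 6) × (Fin N → Fin 2) =>
        res A s.1 = yA ∧ ¬(res A s.2 = xA)), w s = q - q * p := by
    have h := Finset.sum_filter_add_sum_filter_not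
      (Finset.univ.filter (fun s : (Fin N → Fin 6) × (Fin N → Fin 2) => res A s.1 = yA))
      (fun s => res A s.2 = xA) w
    rw [Finset.filter_filter, Finset.filter_filter, hWq] at h
    rw [hWqp] at h
    linarith
  have hWtot : ∑ s : (Fin N → Fin 6) × (Fin N → Fin 2), w s = 1 := by
    rw [Fintype.sum_prod_type]
    have hrow : ∀ a : Fin N → Fin 6, ∑ b : Fin N → Fin 2, w (a, b) = 1 / 6 ^ N := by
      intro a
      simp only [hwdef]
      rw [← Finset.mul_sum, born_total hsum, mul_one]
    rw [Finset.sum_congr rfl fun a _ => hrow a, Finset.sum_const, nsmul_eq_mul,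
      Finset.card_univ]
    rw [show Fintype.card (Fin N → Fin 6) = 6 ^ N by simp [Fintype.card_fun]]
    push_cast
    field_simp
  have hW0 : ∑ s ∈ Finset.univ.filter
      (fun s : (Fin N → Fin 6) × (Fin N → Fin 2) =>
        ¬(res A s.1 = yA ∧ res A s.2 = xA) ∧
          ¬(res A s.1 = yA ∧ ¬(res A s.2 = xA))), w s = 1 - q := by
    have hiff : Finset.univ.filter
        (fun s : (Fin N → Fin 6) × (Fin N → Fin 2) =>
          ¬(res A s.1 = yA ∧ res A s.2 = xA) ∧
            ¬(res A s.1 = yA ∧ ¬(res A s.2 = xA)))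
        = Finset.univ.filter
          (fun s : (Fin N → Fin 6) × (Fin N → Fin 2) => ¬(res A s.1 = yA)) := by
      apply Finset.filter_congr
      intro s _
      constructor
      · rintro ⟨h1, h2⟩ hy
        by_cases hx : res A s.2 = xA
        · exact h1 ⟨hy, hx⟩
        · exact h2 ⟨hy, hx⟩
      · exact fun h => ⟨fun hc => h hc.1, fun hc => h hc.1⟩
    rw [hiff]
    have h := Finset.sum_filter_add_sum_filter_not Finset.univ
      (fun s : (Fin N → Fin 6) × (Fin N → Fin 2) => res A s.1 = yA) w
    rw [hWq, hWtot] at h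
    linarith
  -- bounds on p
  have hp0 : 0 ≤ p := by
    have hpos : 0 ≤ q * p := by
      rw [← hWqp]
      exact Finset.sum_nonneg fun s _ => hw s
    nlinarith
  have hp1 : p ≤ 1 := by
    have hle : q * p ≤ q := by
      rw [← hWqp, ← hWq]
      exact sum_filter_le_filter w hw _ _ (fun s h => h.1)
    nlinarith
  -- constants
  set c1p : ℝ := 4 * ε * (1 - p - ε) with hc1p
  set c2p : ℝ := -(4 * ε) * (p + ε) with hc2p
  set c1m : ℝ := -(4 * ε) * ((1 - p) + ε) with hc1m
  set c2m : ℝ := 4 * ε * (1 - (1 - p) - ε) with hc2m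
  -- counts abbreviations are inline; implication
  have himp : ∀ ω : Fin NMes → (Fin N → Fin 6) × (Fin N → Fin 2),
      (|estim A xA yA ω - redElem M A xA yA| ≥ ε) →
      (0 ≤ c1p * ((Finset.univ.filter fun i =>
            res A (ω i).1 = yA ∧ res A (ω i).2 = xA).card : ℝ)
          + c2p * ((Finset.univ.filter fun i =>
            res A (ω i).1 = yA ∧ ¬(res A (ω i).2 = xA)).card : ℝ)) ∨
      (0 ≤ c1m * ((Finset.univ.filter fun i =>
            res A (ω i).1 = yA ∧ res A (ω i).2 = xA).card : ℝ)
          + c2m * ((Finset.univ.filter fun i =>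
            res A (ω i).1 = yA ∧ ¬(res A (ω i).2 = xA)).card : ℝ)) := by
    intro ω hbad
    set n1 : ℝ := ((Finset.univ.filter fun i =>
      res A (ω i).1 = yA ∧ res A (ω i).2 = xA).card : ℝ) with hn1
    set n2 : ℝ := ((Finset.univ.filter fun i =>
      res A (ω i).1 = yA ∧ ¬(res A (ω i).2 = xA)).card : ℝ) with hn2
    have hn1nn : 0 ≤ n1 := by rw [hn1]; positivity
    have hn2nn : 0 ≤ n2 := by rw [hn2]; positivity
    have hsplit : ((Finset.univ.filter fun i => res A (ω i).1 = yA).card : ℝ) = n1 + n2 := by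
      rw [hn1, hn2]
      rw [← Nat.cast_add]
      congr 1
      rw [← Finset.filter_filter, ← Finset.filter_filter]
      exact (Finset.card_filter_add_card_filter_not
        (s := Finset.univ.filter fun i => res A (ω i).1 = yA)
        (p := fun i => res A (ω i).2 = xA)).symm
    have hest : estim A xA yA ω = n1 / (n1 + n2) := by
      rw [estim, hsplit, hn1]
    rw [hest] at hbad
    by_cases hzero : n1 + n2 = 0
    · left
      have h1 : n1 = 0 := by linarith
      have h2 : n2 = 0 := by linarith
      rw [h1, h2]
      simp
    · have hpos : 0 < n1 + n2 := lt_of_le_of_ne (by linarith) (Ne.symm hzero)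
      rw [ge_iff_le, le_abs] at hbad
      rcases hbad with hcase | hcase
      · -- ε ≤ n1/(n1+n2) - p
        left
        have hge : (p + ε) * (n1 + n2) ≤ n1 := by
          rw [← le_div_iff₀ hpos]
          linarith
        have expand : c1p * n1 + c2p * n2 = 4 * ε * (n1 - (p + ε) * (n1 + n2)) := by
          rw [hc1p, hc2p]; ring
        rw [expand]
        apply mul_nonneg (by positivity)
        linarith
      · -- ε ≤ -(n1/(n1+n2) - p)
        right
        have hle' : n1 ≤ (p - ε) * (n1 + n2) := by
          rw [← div_le_iff₀ hpos]
          linarith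
        have expand : c1m * n1 + c2m * n2 = 4 * ε * (n2 - ((1 - p) + ε) * (n1 + n2)) := by
          rw [hc1m, hc2m]; ring
        rw [expand]
        apply mul_nonneg (by positivity)
        linarith
  -- chernoff on both sides
  have hch1 := chernoff_core NMes w hw
    (fun s : (Fin N → Fin 6) × (Fin N → Fin 2) => res A s.1 = yA ∧ res A s.2 = xA)
    (fun s => res A s.1 = yA ∧ ¬(res A s.2 = xA))
    (fun s h => h.2.2 h.1.2) c1p c2p
  have hch2 := chernoff_core NMes w hw
    (fun s : (Fin N → Fin 6) × (Fin N → Fin 2) => res A s.1 = yA ∧ res A s.2 = xA)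
    (fun s => res A s.1 = yA ∧ ¬(res A s.2 = xA))
    (fun s h => h.2.2 h.1.2) c1m c2m
  rw [hW0, hWqp, hW2] at hch1 hch2
  -- numeric bound on the bases
  set c : ℝ := 1 - Real.exp (-2 * ε ^ 2) with hc
  have hexp2 : Real.exp (-2 * ε ^ 2) < 1 := by
    rw [Real.exp_lt_one_iff]
    nlinarith
  have hbase_p : 1 - q + q * p * Real.exp c1p + (q - q * p) * Real.exp c2p
      ≤ Real.exp (-(c * q)) := by
    have hside := side_bound p ε hp0 hp1 hε
    have h1 : q * p * Real.exp c1p + (q - q * p) * Real.exp c2p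
        = q * (p * Real.exp c1p + (1 - p) * Real.exp c2p) := by ring
    have h2 : q * (p * Real.exp c1p + (1 - p) * Real.exp c2p)
        ≤ q * Real.exp (-2 * ε ^ 2) := by
      apply mul_le_mul_of_nonneg_left _ hq0.le
      exact hside
    have h3 : 1 - q + q * Real.exp (-2 * ε ^ 2) = 1 - c * q := by rw [hc]; ring
    have h4 : 1 - c * q ≤ Real.exp (-(c * q)) := by
      have := Real.add_one_le_exp (-(c * q))
      linarith
    linarith
  have hbase_m : 1 - q + q * p * Real.exp c1m + (q - q * p) * Real.exp c2m
      ≤ Real.exp (-(c * q)) := by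
    have hside := side_bound (1 - p) ε (by linarith) (by linarith) hε
    have he1 : 4 * ε * (1 - (1 - p) - ε) = c2m := by rw [hc2m]
    have he2 : -(4 * ε) * ((1 - p) + ε) = c1m := by rw [hc1m]
    rw [he1, he2] at hside
    have h1 : q * p * Real.exp c1m + (q - q * p) * Real.exp c2m
        = q * ((1 - p) * Real.exp c2m + (1 - (1 - p)) * Real.exp c1m) := by ring
    have h2 : q * ((1 - p) * Real.exp c2m + (1 - (1 - p)) * Real.exp c1m)
        ≤ q * Real.exp (-2 * ε ^ 2) := by
      apply mul_le_mul_of_nonneg_left _ hq0.le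
      linarith
    have h3 : 1 - q + q * Real.exp (-2 * ε ^ 2) = 1 - c * q := by rw [hc]; ring
    have h4 : 1 - c * q ≤ Real.exp (-(c * q)) := by
      have := Real.add_one_le_exp (-(c * q))
      linarith
    linarith
  have hbase_nn : 0 ≤ 1 - q + q * p * Real.exp c1p + (q - q * p) * Real.exp c2p := by
    have : q ≤ 1 := by
      rw [hq]
      rw [div_le_one h6k]
      exact one_le_pow₀ (by norm_num)
    have hqp : 0 ≤ q * p := mul_nonneg hq0.le hp0
    have hq2 : 0 ≤ q - q * p := by nlinarith
    have := Real.exp_pos c1p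
    have := Real.exp_pos c2p
    nlinarith
  have hbase_nn' : 0 ≤ 1 - q + q * p * Real.exp c1m + (q - q * p) * Real.exp c2m := by
    have : q ≤ 1 := by
      rw [hq]
      rw [div_le_one h6k]
      exact one_le_pow₀ (by norm_num)
    have hqp : 0 ≤ q * p := mul_nonneg hq0.le hp0
    have hq2 : 0 ≤ q - q * p := by nlinarith
    have := Real.exp_pos c1m
    have := Real.exp_pos c2m
    nlinarith
  have hpow : ∀ base : ℝ, 0 ≤ base → base ≤ Real.exp (-(c * q)) →
      base ^ NMes ≤ Real.exp (-c * NMes / 6 ^ k) := by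
    intro base h0 hle
    calc base ^ NMes ≤ (Real.exp (-(c * q))) ^ NMes := pow_le_pow_left₀ h0 hle NMes
      _ = Real.exp (-(c * q) * NMes) := by
          rw [← Real.exp_nat_mul]
          congr 1
          ring
      _ = Real.exp (-c * NMes / 6 ^ k) := by
          congr 1
          rw [hq]
          field_simp
  -- final assembly
  have hstep1 : ∑ ω ∈ Finset.univ.filter
      (fun ω : Fin NMes → (Fin N → Fin 6) × (Fin N → Fin 2) =>
        |estim A xA yA ω - redElem M A xA yA| ≥ ε), wgt M ω
      = ∑ ω ∈ Finset.univ.filter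
      (fun ω : Fin NMes → (Fin N → Fin 6) × (Fin N → Fin 2) =>
        |estim A xA yA ω - redElem M A xA yA| ≥ ε), ∏ i, w (ω i) :=
    Finset.sum_congr rfl fun ω _ => hwgt ω
  rw [hstep1]
  have hwprod : ∀ ω : Fin NMes → (Fin N → Fin 6) × (Fin N → Fin 2),
      0 ≤ ∏ i, w (ω i) := fun ω => Finset.prod_nonneg fun i _ => hw _
  have key1 : ∑ ω ∈ Finset.univ.filter
      (fun ω : Fin NMes → (Fin N → Fin 6) × (Fin N → Fin 2) =>
        |estim A xA yA ω - redElem M A xA yA| ≥ ε), ∏ i, w (ω i)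
      ≤ ∑ ω ∈ Finset.univ.filter
      (fun ω : Fin NMes → (Fin N → Fin 6) × (Fin N → Fin 2) =>
        (0 ≤ c1p * ((Finset.univ.filter fun i =>
              res A (ω i).1 = yA ∧ res A (ω i).2 = xA).card : ℝ)
            + c2p * ((Finset.univ.filter fun i =>
              res A (ω i).1 = yA ∧ ¬(res A (ω i).2 = xA)).card : ℝ)) ∨
        (0 ≤ c1m * ((Finset.univ.filter fun i =>
              res A (ω i).1 = yA ∧ res A (ω i).2 = xA).card : ℝ)
            + c2m * ((Finset.univ.filter fun i =>
              res A (ω i).1 = yA ∧ ¬(res A (ω i).2 = xA)).card : ℝ))),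
      ∏ i, w (ω i) :=
    sum_filter_le_filter _ hwprod _ _ himp
  have key2 : ∑ ω ∈ Finset.univ.filter
      (fun ω : Fin NMes → (Fin N → Fin 6) × (Fin N → Fin 2) =>
        (0 ≤ c1p * ((Finset.univ.filter fun i =>
              res A (ω i).1 = yA ∧ res A (ω i).2 = xA).card : ℝ)
            + c2p * ((Finset.univ.filter fun i =>
              res A (ω i).1 = yA ∧ ¬(res A (ω i).2 = xA)).card : ℝ)) ∨
        (0 ≤ c1m * ((Finset.univ.filter fun i =>
              res A (ω i).1 = yA ∧ res A (ω i).2 = xA).card : ℝ)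
            + c2m * ((Finset.univ.filter fun i =>
              res A (ω i).1 = yA ∧ ¬(res A (ω i).2 = xA)).card : ℝ))),
      ∏ i, w (ω i)
      ≤ (∑ ω ∈ Finset.univ.filter
      (fun ω : Fin NMes → (Fin N → Fin 6) × (Fin N → Fin 2) =>
        0 ≤ c1p * ((Finset.univ.filter fun i =>
              res A (ω i).1 = yA ∧ res A (ω i).2 = xA).card : ℝ)
            + c2p * ((Finset.univ.filter fun i =>
              res A (ω i).1 = yA ∧ ¬(res A (ω i).2 = xA)).card : ℝ)),
      ∏ i, w (ω i))
      + ∑ ω ∈ Finset.univ.filter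
      (fun ω : Fin NMes → (Fin N → Fin 6) × (Fin N → Fin 2) =>
        0 ≤ c1m * ((Finset.univ.filter fun i =>
              res A (ω i).1 = yA ∧ res A (ω i).2 = xA).card : ℝ)
            + c2m * ((Finset.univ.filter fun i =>
              res A (ω i).1 = yA ∧ ¬(res A (ω i).2 = xA)).card : ℝ)),
      ∏ i, w (ω i) :=
    sum_filter_or_le _ hwprod _ _
  have hfin1 := le_trans hch1 (hpow _ hbase_nn hbase_p)
  have hfin2 := le_trans hch2 (hpow _ hbase_nn' hbase_m)
  have : (2:ℝ) * Real.exp (-(1 - Real.exp (-2 * ε ^ 2)) * NMes / 6 ^ k)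
      = Real.exp (-c * NMes / 6 ^ k) + Real.exp (-c * NMes / 6 ^ k) := by
    rw [hc]; ring
  rw [this]
  exact le_trans key1 (le_trans key2 (add_le_add (le_trans hfin1 le_rfl)
    (le_trans hfin2 le_rfl)))

/-- QDOT sample complexity: for a POVM `M` on `N` qubits, inputs drawn
uniformly i.i.d. from `S₆^N` and Born-rule outcomes, the probability that for some subset
`A` of size `k` and some `x_A` the estimator deviates by `≥ ε` is at most
`2 · 2^k · C(N,k) · exp(−(1 − e^{−2ε²}) N_Mes / 6^k)`; consequently
`N_Mes ≥ (6^k/(1 − e^{−2ε²}))[(k+1)log 2 + log C(N,k) + log(1/δ)]` circuits suffice for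
accuracy `ε` with probability `≥ 1 − δ`. -/
theorem qdot_sample_complexity (N k NMes : ℕ) (hk : k ≤ N)
    (M : (Fin N → Fin 2) → Matrix (Fin N → Fin 2) (Fin N → Fin 2) ℂ)
    (hpsd : ∀ x, (M x).PosSemidef) (hsum : ∑ x, M x = 1)
    (ytilde : Fin N → Fin 6) (ε : ℝ) (hε : 0 < ε) :
    badProb N k NMes M ytilde ε ≤
        2 * 2 ^ k * (N.choose k : ℝ) *
          Real.exp (-(1 - Real.exp (-2 * ε ^ 2)) * NMes / 6 ^ k) ∧
      ∀ δ : ℝ, 0 < δ →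
        (NMes : ℝ) ≥ ((6 : ℝ) ^ k / (1 - Real.exp (-2 * ε ^ 2))) *
            (((k : ℝ) + 1) * Real.log 2 + Real.log (N.choose k : ℝ) + Real.log (1 / δ)) →
        badProb N k NMes M ytilde ε ≤ δ := by
  classical
  have hwgt_nn : ∀ ω : Fin NMes → (Fin N → Fin 6) × (Fin N → Fin 2), 0 ≤ wgt M ω :=
    fun ω => Finset.prod_nonneg fun i _ =>
      mul_nonneg (by positivity) (born_nonneg hpsd (ω i).1 (ω i).2)
  have hC1 : (1:ℝ) ≤ (N.choose k : ℝ) := by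
    exact_mod_cast Nat.succ_le_of_lt (Nat.choose_pos hk)
  have hC0 : (0:ℝ) < (N.choose k : ℝ) := by linarith
  have hcpos : 0 < 1 - Real.exp (-2 * ε ^ 2) := by
    have : Real.exp (-2 * ε ^ 2) < 1 := by
      rw [Real.exp_lt_one_iff]
      nlinarith
    linarith
  have part1 : badProb N k NMes M ytilde ε ≤
      2 * 2 ^ k * (N.choose k : ℝ) *
        Real.exp (-(1 - Real.exp (-2 * ε ^ 2)) * NMes / 6 ^ k) := by
    unfold badProb
    refine le_trans (union_bound' (wgt M) hwgt_nn (Finset.univ.powersetCard k) _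
      (fun A => Finset.univ.filter
        (fun ω : Fin NMes → (Fin N → Fin 6) × (Fin N → Fin 2) =>
          ∃ xA : {j // j ∈ A} → Fin 2,
            |estim A xA (res A ytilde) ω - redElem M A xA (res A ytilde)| ≥ ε))
      ?_) ?_
    · intro ω hω
      rw [Finset.mem_filter] at hω
      obtain ⟨A, hAk, xA, hx⟩ := hω.2
      exact ⟨A, Finset.mem_powersetCard_univ.mpr hAk,
        Finset.mem_filter.mpr ⟨Finset.mem_univ _, ⟨xA, hx⟩⟩⟩
    have step2 : ∀ A ∈ Finset.univ.powersetCard k,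
        (∑ ω ∈ Finset.univ.filter
          (fun ω : Fin NMes → (Fin N → Fin 6) × (Fin N → Fin 2) =>
            ∃ xA : {j // j ∈ A} → Fin 2,
              |estim A xA (res A ytilde) ω - redElem M A xA (res A ytilde)| ≥ ε),
          wgt M ω)
        ≤ 2 ^ k * (2 * Real.exp (-(1 - Real.exp (-2 * ε ^ 2)) * NMes / 6 ^ k)) := by
      intro A hA
      have hAk : A.card = k := Finset.mem_powersetCard_univ.mp hA
      refine le_trans (union_bound' (wgt M) hwgt_nn
        (Finset.univ : Finset ({j // j ∈ A} → Fin 2)) _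
        (fun xA => Finset.univ.filter
          (fun ω : Fin NMes → (Fin N → Fin 6) × (Fin N → Fin 2) =>
            |estim A xA (res A ytilde) ω - redElem M A xA (res A ytilde)| ≥ ε))
        ?_) ?_
      · intro ω hω
        rw [Finset.mem_filter] at hω
        obtain ⟨xA, hx⟩ := hω.2
        exact ⟨xA, Finset.mem_univ _,
          Finset.mem_filter.mpr ⟨Finset.mem_univ _, hx⟩⟩
      have step2b : ∀ xA : {j // j ∈ A} → Fin 2,
          (∑ ω ∈ Finset.univ.filter
            (fun ω : Fin NMes → (Fin N → Fin 6) × (Fin N → Fin 2) =>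
              |estim A xA (res A ytilde) ω - redElem M A xA (res A ytilde)| ≥ ε),
            wgt M ω)
          ≤ 2 * Real.exp (-(1 - Real.exp (-2 * ε ^ 2)) * NMes / 6 ^ k) :=
        fun xA => pair_bound hk M hpsd hsum A hAk xA (res A ytilde) ε hε
      calc (∑ xA : {j // j ∈ A} → Fin 2, ∑ ω ∈ Finset.univ.filter
            (fun ω : Fin NMes → (Fin N → Fin 6) × (Fin N → Fin 2) =>
              |estim A xA (res A ytilde) ω - redElem M A xA (res A ytilde)| ≥ ε),
            wgt M ω)
          ≤ ∑ _xA : {j // j ∈ A} → Fin 2,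
              2 * Real.exp (-(1 - Real.exp (-2 * ε ^ 2)) * NMes / 6 ^ k) :=
            Finset.sum_le_sum fun xA _ => step2b xA
        _ = 2 ^ k * (2 * Real.exp (-(1 - Real.exp (-2 * ε ^ 2)) * NMes / 6 ^ k)) := by
            rw [Finset.sum_const, Finset.card_univ, nsmul_eq_mul]
            congr 1
            rw [Fintype.card_fun]
            have hcA : Fintype.card {j // j ∈ A} = k := by
              simp [hAk]
            rw [hcA]
            simp
    calc (∑ A ∈ Finset.univ.powersetCard k, ∑ ω ∈ Finset.univ.filter
          (fun ω : Fin NMes → (Fin N → Fin 6) × (Fin N → Fin 2) =>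
            ∃ xA : {j // j ∈ A} → Fin 2,
              |estim A xA (res A ytilde) ω - redElem M A xA (res A ytilde)| ≥ ε),
          wgt M ω)
        ≤ ∑ _A ∈ Finset.univ.powersetCard k,
            2 ^ k * (2 * Real.exp (-(1 - Real.exp (-2 * ε ^ 2)) * NMes / 6 ^ k)) :=
          Finset.sum_le_sum step2
      _ = 2 * 2 ^ k * (N.choose k : ℝ) *
            Real.exp (-(1 - Real.exp (-2 * ε ^ 2)) * NMes / 6 ^ k) := by
          rw [Finset.sum_const, Finset.card_powersetCard, Finset.card_univ,
            Fintype.card_fin, nsmul_eq_mul]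
          ring
  refine ⟨part1, ?_⟩
  intro δ hδ hNMes
  set c : ℝ := 1 - Real.exp (-2 * ε ^ 2) with hc
  have h6k : (0:ℝ) < 6 ^ k := by positivity
  have h2k : (0:ℝ) < 2 ^ k := by positivity
  set X : ℝ := δ / ((2:ℝ) ^ (k + 1) * (N.choose k : ℝ)) with hX
  have hXpos : 0 < X := by
    rw [hX]
    positivity
  have hlogX : Real.log X = Real.log δ - ((k:ℝ) + 1) * Real.log 2 - Real.log (N.choose k : ℝ) := by
    rw [hX, Real.log_div (ne_of_gt hδ) (by positivity), Real.log_mul (by positivity)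
      (ne_of_gt hC0), Real.log_pow]
    push_cast
    ring
  have hL : -(c * NMes / 6 ^ k) ≤ Real.log X := by
    have hlog1δ : Real.log (1 / δ) = -Real.log δ := by
      rw [one_div, Real.log_inv]
    have hNMes' : (6:ℝ) ^ k / c *
        (((k : ℝ) + 1) * Real.log 2 + Real.log (N.choose k : ℝ) + Real.log (1 / δ))
        ≤ NMes := hNMes
    set L : ℝ := ((k : ℝ) + 1) * Real.log 2 + Real.log (N.choose k : ℝ) + Real.log (1 / δ)
      with hLdef
    have hstep : L ≤ c * NMes / 6 ^ k := by
      have h1 : c / 6 ^ k * ((6:ℝ) ^ k / c * L) ≤ c / 6 ^ k * NMes := by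
        apply mul_le_mul_of_nonneg_left hNMes'
        positivity
      have h2 : c / 6 ^ k * ((6:ℝ) ^ k / c * L) = L := by
        field_simp
      have h3 : c / 6 ^ k * (NMes:ℝ) = c * NMes / 6 ^ k := by ring
      linarith [h1, h2.symm.le]
    rw [hlogX]
    rw [hLdef, hlog1δ] at hstep
    linarith
  have hEX : Real.exp (-c * NMes / 6 ^ k) ≤ X := by
    calc Real.exp (-c * NMes / 6 ^ k) = Real.exp (-(c * NMes / 6 ^ k)) := by ring_nf
      _ ≤ Real.exp (Real.log X) := Real.exp_le_exp.mpr hL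
      _ = X := Real.exp_log hXpos
  calc badProb N k NMes M ytilde ε
      ≤ 2 * 2 ^ k * (N.choose k : ℝ) * Real.exp (-c * NMes / 6 ^ k) := part1
    _ ≤ 2 * 2 ^ k * (N.choose k : ℝ) * X :=
        mul_le_mul_of_nonneg_left hEX (by positivity)
    _ = δ := by
        rw [hX]
        field_simp
        ring
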